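/- Let p/q be an even rational parameter with p ≥ 2, even predecessor p'/q', and core predecessor p̂/q̂. Then p'/q' is also the even predecessor of p̂/q̂. -/

import Mathlib

/-- An *even rational parameter* is a fraction `p/q` with `p, q` coprime positive
integers, `p < q`, and `p*q` even. -/
def EvenParam (p q : ℕ) : Prop :=
  Nat.Coprime p q ∧ 0 < p ∧ p < q ∧ Even (p * q)

/-- `τ` is the *tune* of `p/q`: `0 < 2τ < p+q` and `2pτ ≡ ±1 (mod p+q)`. -/
def IsTune (p q τ : ℕ) : Prop :=
  0 < 2 * τ ∧ 2 * τ < p + q ∧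
    (((p : ℤ) + q) ∣ 2 * p * τ - 1 ∨ ((p : ℤ) + q) ∣ 2 * p * τ + 1)

/-- `p'/q'` is the *even predecessor* of `p/q`. -/
def IsEvenPred (p q p' q' : ℕ) : Prop :=
  Nat.Coprime p' q' ∧ p' < q' ∧ Even (p' * q') ∧
    ((p : ℤ) * q' - (q : ℤ) * p').natAbs = 1 ∧ p' + q' < p + q

/-- `κ` is the unique nonnegative integer with `κ/(2κ+1) ≤ τ/(p+q) < (κ+1)/(2κ+3)`. -/
def IsKappa (p q τ κ : ℕ) : Prop :=
  κ * (p + q) ≤ (2 * κ + 1) * τ ∧ (2 * κ + 3) * τ < (κ + 1) * (p + q)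

/-- the even predecessor of p/q is also the even predecessor of
the core predecessor of p/q. -/
theorem evenPred_of_corePred (p q τ κ p' q' phat qhat : ℕ)
    (h : EvenParam p q) (hp2 : 2 ≤ p)
    (hτ : IsTune p q τ) (hκ : IsKappa p q τ κ)
    (hpred : IsEvenPred p q p' q')
    (hphat : phat + 2 * κ * p' = p) (hqhat : qhat + 2 * κ * q' = q) :
    IsEvenPred phat qhat p' q' := by
  obtain ⟨hcop, hp0, hpltq, hev⟩ := h
  obtain ⟨hcop', hpq', hev', habs, hlt⟩ := hpred
  obtain ⟨hτ0, hτω, hτd⟩ := hτ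
  obtain ⟨hκ1, hκ2⟩ := hκ
  -- parity facts
  have hωodd : Odd (p + q) := by
    rcases Nat.even_or_odd p with hp | hp <;> rcases Nat.even_or_odd q with hq | hq
    · exact absurd hcop (by
        obtain ⟨a, ha⟩ := hp; obtain ⟨b, hb⟩ := hq
        have : 2 ∣ Nat.gcd p q := Nat.dvd_gcd ⟨a, by omega⟩ ⟨b, by omega⟩
        unfold Nat.Coprime; omega)
    · obtain ⟨a, ha⟩ := hp; obtain ⟨b, hb⟩ := hq; exact ⟨a + b, by omega⟩
    · obtain ⟨a, ha⟩ := hp; obtain ⟨b, hb⟩ := hq; exact ⟨a + b, by omega⟩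
    · exfalso
      have : Odd (p * q) := hp.mul hq
      exact (Nat.not_even_iff_odd.mpr this) hev
  have hsodd : Odd (p' + q') := by
    rcases Nat.even_or_odd p' with hp' | hp' <;> rcases Nat.even_or_odd q' with hq' | hq'
    · exfalso
      have hq0 : 0 < q' := by omega
      obtain ⟨a, ha⟩ := hp'; obtain ⟨b, hb⟩ := hq'
      have : 2 ∣ Nat.gcd p' q' := Nat.dvd_gcd ⟨a, by omega⟩ ⟨b, by omega⟩
      have := hcop'
      unfold Nat.Coprime at this; omega
    · obtain ⟨a, ha⟩ := hp'; obtain ⟨b, hb⟩ := hq'; exact ⟨a + b, by omega⟩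
    · obtain ⟨a, ha⟩ := hp'; obtain ⟨b, hb⟩ := hq'; exact ⟨a + b, by omega⟩
    · exfalso
      have : Odd (p' * q') := hp'.mul hq'
      exact (Nat.not_even_iff_odd.mpr this) hev'
  -- ε = ±1
  have hε : (p:ℤ) * q' - q * p' = 1 ∨ (p:ℤ) * q' - q * p' = -1 := by
    have := Int.natAbs_eq_iff.mp habs
    simpa using this
  -- key identity: p*(p'+q') = (p+q)*p' + ε
  have hkey : (p:ℤ) * (p' + q') = (p + q) * p' + ((p:ℤ) * q' - q * p') := by ring
  -- τ₀ with 2τ₀ = (p+q) - (p'+q')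
  obtain ⟨a, ha⟩ := hsodd
  obtain ⟨b, hb⟩ := hωodd
  obtain ⟨τ₀, hτ₀, hτ₀pos⟩ : ∃ t, 2 * t + (p' + q') = p + q ∧ 0 < t :=
    ⟨b - a, by omega, by omega⟩
  -- (p+q) ∣ 2p·τ₀ + ε
  have hdvd0 : ((p:ℤ) + q) ∣ 2 * p * τ₀ + ((p:ℤ) * q' - q * p') := by
    have hc : (2 * τ₀ : ℤ) + ((p':ℤ) + q') = (p:ℤ) + q := by exact_mod_cast hτ₀
    refine ⟨(p:ℤ) - p', ?_⟩
    linear_combination (p:ℤ) * hc - hkey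
  -- coprimality of 2p and p+q
  have hcop2p : IsCoprime ((p:ℤ) + q) (2 * p) := by
    have h1 : Nat.Coprime p (p + q) := by
      simpa using (Nat.coprime_add_self_left).mpr hcop.symm |>.symm
    have h2 : Nat.Coprime 2 (p + q) := by
      rw [Nat.coprime_two_left]; exact ⟨b, by omega⟩
    have : Nat.Coprime (2 * p) (p + q) := Nat.Coprime.mul h2 h1
    have h3 := Nat.isCoprime_iff_coprime.mpr this
    push_cast at h3 ⊢
    exact h3.symm
  -- τ = τ₀
  have hττ₀ : τ = τ₀ := by
    have hdvd : ((p:ℤ) + q) ∣ 2 * p * ((τ:ℤ) - τ₀) ∨ ((p:ℤ) + q) ∣ 2 * p * ((τ:ℤ) + τ₀) := by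
      rcases hτd with h1 | h1 <;> rcases hε with h2 | h2
      · right
        have := dvd_add h1 hdvd0
        rw [h2] at this
        convert this using 1; rfl; ring
      · left
        have := dvd_sub h1 hdvd0
        rw [h2] at this
        convert this using 1; rfl; ring
      · left
        have := dvd_sub h1 hdvd0
        rw [h2] at this
        convert this using 1; rfl; ring
      · right
        have := dvd_add h1 hdvd0
        rw [h2] at this
        convert this using 1; rfl; ring
    have hωpos : (0:ℤ) < (p:ℤ) + q := by positivity
    rcases hdvd with hd | hd
    · obtain ⟨c, hc⟩ := hcop2p.dvd_of_dvd_mul_left hd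
      have hb1 : ((τ:ℤ) - τ₀) < (p:ℤ) + q := by
        have : (τ₀:ℤ) ≥ 0 := by positivity
        have h2τ : (2:ℤ) * τ < (p:ℤ) + q := by exact_mod_cast hτω
        omega
      have hb2 : -((p:ℤ) + q) < ((τ:ℤ) - τ₀) := by
        have h2τ₀ : (2:ℤ) * τ₀ + ((p':ℤ) + q') = (p:ℤ) + q := by exact_mod_cast hτ₀
        have : (0:ℤ) ≤ (p':ℤ) + q' := by positivity
        have : (0:ℤ) ≤ (τ:ℤ) := by positivity
        omega
      have hc0 : c = 0 := by
        by_contra hne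
        rcases lt_or_gt_of_ne hne with h | h
        · have : ((p:ℤ) + q) * c ≤ ((p:ℤ) + q) * (-1) :=
            mul_le_mul_of_nonneg_left (by omega) (by omega)
          omega
        · have : ((p:ℤ) + q) * 1 ≤ ((p:ℤ) + q) * c :=
            mul_le_mul_of_nonneg_left (by omega) (by omega)
          omega
      rw [hc0, mul_zero] at hc
      omega
    · exfalso
      obtain ⟨c, hc⟩ := hcop2p.dvd_of_dvd_mul_left hd
      have hc1 : (0:ℤ) < (τ:ℤ) + τ₀ := by
        have : (0:ℤ) < (τ₀:ℤ) := by exact_mod_cast hτ₀pos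
        have : (0:ℤ) ≤ (τ:ℤ) := by positivity
        omega
      have hc2 : (τ:ℤ) + τ₀ < (p:ℤ) + q := by
        have h2τ : (2:ℤ) * τ < (p:ℤ) + q := by exact_mod_cast hτω
        have h2τ₀ : (2:ℤ) * τ₀ + ((p':ℤ) + q') = (p:ℤ) + q := by exact_mod_cast hτ₀
        have : (0:ℤ) ≤ (p':ℤ) + q' := by positivity
        omega
      have hc0 : c = 0 := by
        by_contra hne
        rcases lt_or_gt_of_ne hne with h | h
        · have : ((p:ℤ) + q) * c ≤ ((p:ℤ) + q) * (-1) :=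
            mul_le_mul_of_nonneg_left (by omega) (by omega)
          omega
        · have : ((p:ℤ) + q) * 1 ≤ ((p:ℤ) + q) * c :=
            mul_le_mul_of_nonneg_left (by omega) (by omega)
          omega
      rw [hc0, mul_zero] at hc
      omega
  have hω : 2 * τ + (p' + q') = p + q := by rw [hττ₀]; exact hτ₀
  -- from κ inequality: κ * s ≤ τ
  have hκs : κ * (p' + q') ≤ τ := by
    have e : κ * (p + q) = 2 * (κ * τ) + κ * (p' + q') := by rw [← hω]; ring
    have e2 : (2 * κ + 1) * τ = 2 * (κ * τ) + τ := by ring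
    linarith [hκ1]
  -- strictness
  have hsum : phat + qhat + 2 * κ * (p' + q') = p + q := by
    have : 2 * κ * p' + 2 * κ * q' = 2 * κ * (p' + q') := by ring
    omega
  have hgoal : p' + q' < phat + qhat := by
    by_cases hs1 : p' + q' = 1
    · have hp'0 : p' = 0 := by omega
      have hz : 2 * κ * p' = 0 := by rw [hp'0]; ring
      omega
    · -- s ≥ 2; show (2κ+1)s ≠ p+q via coprimality
      have hne : (2 * κ + 1) * (p' + q') ≠ p + q := by
        intro hcontra
        have hcops : IsCoprime ((p':ℤ) + q') ((p:ℤ) + q) := by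
          rcases hε with h2 | h2
          · exact ⟨(p:ℤ), -(p':ℤ), by linear_combination hkey + h2⟩
          · exact ⟨-(p:ℤ), (p':ℤ), by linear_combination -hkey - h2⟩
        have hdvds : ((p':ℤ) + q') ∣ ((p:ℤ) + q) := by
          refine ⟨(2 * κ + 1 : ℤ), ?_⟩
          have : ((2 * κ + 1) * (p' + q') : ℤ) = ((p:ℤ) + q) := by exact_mod_cast hcontra
          linarith [this]
        have hu := hcops.isUnit_of_dvd' dvd_rfl hdvds
        rcases Int.isUnit_iff.mp hu with hs | hs
        · have : p' + q' = 1 := by exact_mod_cast hs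
          exact hs1 this
        · have : (0:ℤ) ≤ (p':ℤ) + q' := by positivity
          omega
      have hle : (2 * κ + 1) * (p' + q') ≤ p + q := by
        have : 2 * (κ * (p' + q')) + (p' + q') ≤ 2 * τ + (p' + q') := by omega
        calc (2 * κ + 1) * (p' + q') = 2 * (κ * (p' + q')) + (p' + q') := by ring
          _ ≤ 2 * τ + (p' + q') := this
          _ = p + q := hω
      have : (2 * κ + 1) * (p' + q') < p + q := lt_of_le_of_ne hle hne
      have hexp : (2 * κ + 1) * (p' + q') = (p' + q') + 2 * κ * (p' + q') := by ring
      omega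
  refine ⟨hcop', hpq', hev', ?_, hgoal⟩
  -- natAbs part
  have h1 : (phat:ℤ) + 2 * κ * p' = p := by exact_mod_cast hphat
  have h2 : (qhat:ℤ) + 2 * κ * q' = q := by exact_mod_cast hqhat
  have : ((phat:ℤ)) * q' - (qhat:ℤ) * p' = (p:ℤ) * q' - q * p' := by
    linear_combination (q':ℤ) * h1 - (p':ℤ) * h2
  rw [this]; exact habs
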